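/- Let G = (V, E, ends) be a multigraph with n = |V| vertices. Then the set of extreme points of the score vector polytope P_G is finite and has at most ∑_{i=0}^{n} n!/i! elements (this number equals ⌊e·n!⌋). -/

import Mathlib

open Finset

/-- The degree `κ_S` of a subset `S` of vertices of a multigraph `(V, E, ends)`. -/
def multigraphKappa {V E : Type*} [Fintype E] [DecidableEq V]
    (ends : E → Sym2 V) (S : Finset V) : ℕ :=
  (Finset.univ.filter fun e => ∃ v ∈ S, v ∈ ends e).card

/-- The score vector polytope of a multigraph. -/
def scorePolytope {V E : Type*} [Fintype E] [DecidableEq V]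
    (ends : E → Sym2 V) : Set (V → ℝ) :=
  {x | (∀ v : V, 0 ≤ x v) ∧
    ∀ S : Finset V, ∑ v ∈ S, x v ≤ (multigraphKappa ends S : ℝ)}

set_option linter.unusedSectionVars false

namespace ScorePolytopeAux

section Aux

variable {V E : Type*} [Fintype E] [DecidableEq V] (ends : E → Sym2 V)

lemma kappa_empty : multigraphKappa ends (∅ : Finset V) = 0 := by
  simp [multigraphKappa]

lemma kappa_mono {S T : Finset V} (h : S ⊆ T) :
    multigraphKappa ends S ≤ multigraphKappa ends T := by
  apply Finset.card_le_card
  intro e he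
  simp only [mem_filter, mem_univ, true_and] at he ⊢
  obtain ⟨v, hv, hv2⟩ := he
  exact ⟨v, h hv, hv2⟩

lemma kappa_submodular (S T : Finset V) :
    multigraphKappa ends (S ∪ T) + multigraphKappa ends (S ∩ T)
      ≤ multigraphKappa ends S + multigraphKappa ends T := by
  classical
  have h1 : (Finset.univ.filter fun e => ∃ v ∈ S ∪ T, v ∈ ends e)
      = (Finset.univ.filter fun e => ∃ v ∈ S, v ∈ ends e)
        ∪ (Finset.univ.filter fun e => ∃ v ∈ T, v ∈ ends e) := by
    ext e
    simp only [mem_filter, mem_union, mem_univ, true_and]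
    constructor
    · rintro ⟨v, hv | hv, h2⟩
      exacts [Or.inl ⟨v, hv, h2⟩, Or.inr ⟨v, hv, h2⟩]
    · rintro (⟨v, hv, h2⟩ | ⟨v, hv, h2⟩)
      exacts [⟨v, Or.inl hv, h2⟩, ⟨v, Or.inr hv, h2⟩]
  have h2 : (Finset.univ.filter fun e => ∃ v ∈ S ∩ T, v ∈ ends e)
      ⊆ (Finset.univ.filter fun e => ∃ v ∈ S, v ∈ ends e)
        ∩ (Finset.univ.filter fun e => ∃ v ∈ T, v ∈ ends e) := by
    intro e he
    simp only [mem_filter, mem_inter, mem_univ, true_and] at he ⊢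
    obtain ⟨v, hv, h3⟩ := he
    exact ⟨⟨v, hv.1, h3⟩, ⟨v, hv.2, h3⟩⟩
  unfold multigraphKappa
  calc _ ≤ ((Finset.univ.filter fun e => ∃ v ∈ S, v ∈ ends e)
        ∪ (Finset.univ.filter fun e => ∃ v ∈ T, v ∈ ends e)).card
      + ((Finset.univ.filter fun e => ∃ v ∈ S, v ∈ ends e)
        ∩ (Finset.univ.filter fun e => ∃ v ∈ T, v ∈ ends e)).card := by
        rw [h1]; exact Nat.add_le_add_left (Finset.card_le_card h2) _
    _ = _ := Finset.card_union_add_card_inter _ _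

/-- Tightness of a constraint. -/
def Tight (x : V → ℝ) (S : Finset V) : Prop :=
  ∑ v ∈ S, x v = (multigraphKappa ends S : ℝ)

variable {ends} {x : V → ℝ}

lemma tight_empty : Tight ends x ∅ := by
  simp [Tight, kappa_empty]

lemma tight_union_inter (hx : x ∈ scorePolytope ends) {S T : Finset V}
    (hS : Tight ends x S) (hT : Tight ends x T) :
    Tight ends x (S ∪ T) ∧ Tight ends x (S ∩ T) := by
  have hsub : ((multigraphKappa ends (S ∪ T) : ℝ) + multigraphKappa ends (S ∩ T))
      ≤ (multigraphKappa ends S : ℝ) + multigraphKappa ends T := by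
    exact_mod_cast kappa_submodular ends S T
  have he : ∑ v ∈ S ∪ T, x v + ∑ v ∈ S ∩ T, x v = ∑ v ∈ S, x v + ∑ v ∈ T, x v :=
    Finset.sum_union_inter
  have l1 := hx.2 (S ∪ T)
  have l2 := hx.2 (S ∩ T)
  unfold Tight at *
  constructor <;> linarith


variable [Fintype V]

lemma extreme_no_dir (hx : x ∈ Set.extremePoints ℝ (scorePolytope ends)) (d : V → ℝ)
    (hd : d ≠ 0) {ε : ℝ} (hε : 0 < ε)
    (h1 : x + ε • d ∈ scorePolytope ends) (h2 : x - ε • d ∈ scorePolytope ends) : False := by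
  obtain ⟨hxP, hext⟩ := hx
  have hseg : x ∈ openSegment ℝ (x + ε • d) (x - ε • d) := by
    refine ⟨1/2, 1/2, by norm_num, by norm_num, by norm_num, by module⟩
  have h := hext h1 h2 hseg
  have : ε • d = 0 := by
    have := congrArg (fun y => y - x) h
    simpa [add_sub_cancel_left] using this
  rcases smul_eq_zero.mp this with h' | h'
  · exact absurd h' (ne_of_gt hε)
  · exact hd h'

lemma exists_pert_one (hx : x ∈ scorePolytope ends) (d : V → ℝ)
    (hpos : ∀ S : Finset V, 0 < ∑ v ∈ S, d v →
      ∑ v ∈ S, x v < (multigraphKappa ends S : ℝ))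
    (hsupp : ∀ v, d v < 0 → 0 < x v) :
    ∃ ε : ℝ, 0 < ε ∧ ∀ ε' : ℝ, 0 < ε' → ε' ≤ ε → x + ε' • d ∈ scorePolytope ends := by
  classical
  set F : Finset V → ℝ := fun S =>
    if 0 < ∑ v ∈ S, d v then ((multigraphKappa ends S : ℝ) - ∑ v ∈ S, x v) / (∑ v ∈ S, d v)
    else 1 with hF
  set G : V → ℝ := fun v => if d v < 0 then x v / (-(d v)) else 1 with hG
  set A : Finset ℝ :=
    insert 1 (((Finset.univ : Finset (Finset V)).image F) ∪ ((Finset.univ : Finset V).image G))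
    with hA
  have hAne : A.Nonempty := insert_nonempty _ _
  refine ⟨A.min' hAne, ?_, ?_⟩
  · rw [Finset.lt_min'_iff]
    intro b hb
    rw [hA, mem_insert, mem_union] at hb
    rcases hb with rfl | hb | hb
    · norm_num
    · obtain ⟨S, -, rfl⟩ := mem_image.mp hb
      rw [hF]
      by_cases h : 0 < ∑ v ∈ S, d v
      · simp only [h, if_true]
        exact div_pos (by linarith [hpos S h]) h
      · simp [h]
    · obtain ⟨v, -, rfl⟩ := mem_image.mp hb
      rw [hG]
      by_cases h : d v < 0
      · simp only [h, if_true]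
        exact div_pos (hsupp v h) (by linarith)
      · simp [h]
  · intro ε' hε' hle
    have hεF : ∀ S : Finset V, ε' ≤ F S := fun S =>
      hle.trans (Finset.min'_le _ _ (by
        rw [hA, mem_insert, mem_union]
        exact Or.inr (Or.inl (mem_image_of_mem F (mem_univ S)))))
    have hεG : ∀ v : V, ε' ≤ G v := fun v =>
      hle.trans (Finset.min'_le _ _ (by
        rw [hA, mem_insert, mem_union]
        exact Or.inr (Or.inr (mem_image_of_mem G (mem_univ v)))))
    constructor
    · intro v
      simp only [Pi.add_apply, Pi.smul_apply, smul_eq_mul]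
      by_cases h : d v < 0
      · have h1 : ε' ≤ x v / (-(d v)) := by simpa [hG, h] using hεG v
        have h2 : ε' * (-(d v)) ≤ x v := by
          rw [← le_div_iff₀ (by linarith)]
          exact h1
        nlinarith
      · push_neg at h
        have := hx.1 v
        nlinarith
    · intro S
      have hsum : ∑ v ∈ S, (x v + ε' * d v) = ∑ v ∈ S, x v + ε' * ∑ v ∈ S, d v := by
        rw [Finset.sum_add_distrib, Finset.mul_sum]
      simp only [Pi.add_apply, Pi.smul_apply, smul_eq_mul]
      rw [hsum]
      by_cases h : 0 < ∑ v ∈ S, d v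
      · have h1 : ε' ≤ ((multigraphKappa ends S : ℝ) - ∑ v ∈ S, x v) / (∑ v ∈ S, d v) := by
          simpa [hF, h] using hεF S
        have h2 : ε' * (∑ v ∈ S, d v) ≤ (multigraphKappa ends S : ℝ) - ∑ v ∈ S, x v := by
          rw [← le_div_iff₀ h]; exact h1
        linarith
      · push_neg at h
        have := hx.2 S
        nlinarith

lemma exists_pert (hx : x ∈ scorePolytope ends) (d : V → ℝ)
    (hpos : ∀ S : Finset V, 0 < ∑ v ∈ S, d v →
      ∑ v ∈ S, x v < (multigraphKappa ends S : ℝ))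
    (hneg : ∀ S : Finset V, ∑ v ∈ S, d v < 0 →
      ∑ v ∈ S, x v < (multigraphKappa ends S : ℝ))
    (hsupp : ∀ v, d v ≠ 0 → 0 < x v) :
    ∃ ε : ℝ, 0 < ε ∧ x + ε • d ∈ scorePolytope ends ∧ x - ε • d ∈ scorePolytope ends := by
  obtain ⟨ε₁, hε₁, h₁⟩ := exists_pert_one hx d hpos (fun v hv => hsupp v (ne_of_lt hv))
  obtain ⟨ε₂, hε₂, h₂⟩ := exists_pert_one hx (-d)
    (by
      intro S hS
      apply hneg S
      simp only [Pi.neg_apply, Finset.sum_neg_distrib] at hS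
      linarith)
    (fun v hv => hsupp v (by simpa using ne_of_gt (by simpa using hv)))
  refine ⟨min ε₁ ε₂, lt_min hε₁ hε₂, h₁ _ (lt_min hε₁ hε₂) (min_le_left _ _), ?_⟩
  have := h₂ _ (lt_min hε₁ hε₂) (min_le_right _ _)
  rwa [smul_neg, ← sub_eq_add_neg] at this


-- REAL lemmas start here
lemma mem_tight (hx : x ∈ Set.extremePoints ℝ (scorePolytope ends)) {v : V}
    (hv : x v ≠ 0) : ∃ S : Finset V, Tight ends x S ∧ v ∈ S := by
  by_contra hcon
  push_neg at hcon
  set d : V → ℝ := fun w => if w = v then 1 else 0 with hd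
  have hsum : ∀ S : Finset V, ∑ w ∈ S, d w = if v ∈ S then (1 : ℝ) else 0 := by
    intro S
    rw [hd]
    exact Finset.sum_ite_eq' S v (fun _ => (1 : ℝ))
  obtain ⟨ε, hε, hmem1, hmem2⟩ := exists_pert hx.1 d
    (by
      intro S hS
      rw [hsum] at hS
      by_cases h : v ∈ S
      · exact lt_of_le_of_ne (hx.1.2 S) (fun ht => hcon S ht h)
      · simp [h] at hS)
    (by intro S hS; rw [hsum] at hS; split_ifs at hS <;> norm_num at hS)
    (by
      intro w hw
      rw [hd] at hw
      by_cases h : w = v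
      · subst h; exact lt_of_le_of_ne (hx.1.1 w) (Ne.symm hv)
      · simp [h] at hw)
  exact extreme_no_dir hx d (by
    intro h
    have := congrFun h v
    simp [hd] at this) hε hmem1 hmem2

lemma exists_tight_superset (hx : x ∈ Set.extremePoints ℝ (scorePolytope ends))
    (A : Finset V) (hA : ∀ v ∈ A, x v ≠ 0) :
    ∃ S : Finset V, Tight ends x S ∧ A ⊆ S := by
  classical
  induction A using Finset.induction_on with
  | empty => exact ⟨∅, tight_empty, Finset.empty_subset _⟩
  | insert a A' hnotmem ih =>
    obtain ⟨S, hS, hsub⟩ := ih (fun v hv => hA v (mem_insert_of_mem hv))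
    obtain ⟨S', hS', hv⟩ := mem_tight hx (hA a (mem_insert_self a A'))
    refine ⟨S ∪ S', (tight_union_inter hx.1 hS hS').1, ?_⟩
    intro w hw
    rcases mem_insert.mp hw with rfl | hw
    · exact mem_union_right _ hv
    · exact mem_union_left _ (hsub hw)

lemma supp_tight (hx : x ∈ Set.extremePoints ℝ (scorePolytope ends)) :
    Tight ends x (Finset.univ.filter fun v => x v ≠ 0) := by
  classical
  set X := Finset.univ.filter fun v => x v ≠ 0 with hX
  obtain ⟨S, hS, hsub⟩ := exists_tight_superset hx X (by simp [hX])
  have hsum : ∑ v ∈ S, x v = ∑ v ∈ X, x v := by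
    refine (Finset.sum_subset hsub ?_).symm
    intro v _ hv
    rw [hX] at hv
    simp only [mem_filter, mem_univ, true_and, not_not] at hv
    exact hv
  have h1 : (multigraphKappa ends X : ℝ) ≤ multigraphKappa ends S := by
    exact_mod_cast kappa_mono (ends := ends) hsub
  have h2 := hx.1.2 X
  unfold Tight at hS ⊢
  linarith

lemma step_lemma (hx : x ∈ Set.extremePoints ℝ (scorePolytope ends))
    {T U : Finset V} (hT : Tight ends x T) (hU : Tight ends x U) (hTU : T ⊂ U)
    (hUsupp : ∀ v ∈ U, x v ≠ 0) :
    ∃ u ∈ U, u ∉ T ∧ Tight ends x (insert u T) := by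
  classical
  set 𝒜 : Finset (Finset V) := U.powerset.filter (fun S => Tight ends x S ∧ T ⊂ S) with h𝒜
  have hU𝒜 : U ∈ 𝒜 := by
    rw [h𝒜, mem_filter, mem_powerset]
    exact ⟨Finset.Subset.refl U, hU, hTU⟩
  obtain ⟨T', hT'mem, hmin⟩ := Finset.exists_min_image 𝒜 Finset.card ⟨U, hU𝒜⟩
  rw [h𝒜, mem_filter, mem_powerset] at hT'mem
  obtain ⟨hT'U, hT't, hTT'⟩ := hT'mem
  -- separation
  have hsep : ∀ u w S, u ∈ T' → u ∉ T → w ∈ T' → w ∉ T → Tight ends x S → u ∈ S → w ∈ S := by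
    intro u w S hu hunT hw hwnT hS huS
    by_contra hwS
    set T'' := (S ∩ T') ∪ T with hT''
    have ht'' : Tight ends x T'' :=
      (tight_union_inter hx.1 (tight_union_inter hx.1 hS hT't).2 hT).1
    have hsubT' : T'' ⊆ T' := by
      rw [hT'']
      exact Finset.union_subset (Finset.inter_subset_right) hTT'.1
    have hmem : T'' ∈ 𝒜 := by
      rw [h𝒜, mem_filter, mem_powerset]
      refine ⟨hsubT'.trans hT'U, ht'', ?_⟩
      rw [Finset.ssubset_iff_of_subset Finset.subset_union_right]
      exact ⟨u, mem_union_left _ (mem_inter.mpr ⟨huS, hu⟩), hunT⟩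
    have hproper : T'' ⊂ T' := by
      rw [Finset.ssubset_iff_of_subset hsubT']
      refine ⟨w, hw, ?_⟩
      rw [hT'', mem_union, mem_inter]
      push_neg
      exact ⟨fun h => absurd h hwS, hwnT⟩
    exact absurd (hmin T'' hmem) (not_le.mpr (Finset.card_lt_card hproper))
  -- the difference
  set D := T' \ T with hD
  have hDne : D.Nonempty := by
    obtain ⟨u, hu, hunT⟩ := Finset.exists_of_ssubset hTT'
    exact ⟨u, mem_sdiff.mpr ⟨hu, hunT⟩⟩
  by_cases hcard : D.card = 1
  · obtain ⟨u, hu⟩ := Finset.card_eq_one.mp hcard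
    have huD : u ∈ D := hu ▸ Finset.mem_singleton_self u
    rw [mem_sdiff] at huD
    refine ⟨u, hT'U huD.1, huD.2, ?_⟩
    have : insert u T = T' := by
      have h1 : T ∪ D = T' := by
        rw [hD]
        exact Finset.union_sdiff_of_subset hTT'.1
      rw [hu] at h1
      rw [← h1]
      ext w
      simp [mem_insert, mem_union, mem_singleton, or_comm]
    rw [this]
    exact hT't
  · -- two distinct elements
    have h2 : 1 < D.card := lt_of_le_of_ne hDne.card_pos (fun h => hcard h.symm)
    obtain ⟨u, hu, w, hw, huw⟩ := Finset.one_lt_card.mp h2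
    rw [mem_sdiff] at hu hw
    set d : V → ℝ := fun z => (if z = u then 1 else 0) - (if z = w then 1 else 0) with hd
    have hsum : ∀ S : Finset V, ∑ z ∈ S, d z =
        (if u ∈ S then (1 : ℝ) else 0) - (if w ∈ S then (1 : ℝ) else 0) := by
      intro S
      rw [hd]
      rw [Finset.sum_sub_distrib, Finset.sum_ite_eq' S u (fun _ => (1 : ℝ)),
        Finset.sum_ite_eq' S w (fun _ => (1 : ℝ))]
    obtain ⟨ε, hε, hmem1, hmem2⟩ := exists_pert hx.1 d
      (by
        intro S hS
        rw [hsum] at hS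
        by_cases h1 : u ∈ S
        · by_cases h2 : w ∈ S
          · rw [if_pos h1, if_pos h2] at hS; norm_num at hS
          · exact lt_of_le_of_ne (hx.1.2 S)
              fun ht => h2 (hsep u w S hu.1 hu.2 hw.1 hw.2 ht h1)
        · rw [if_neg h1] at hS
          by_cases h2 : w ∈ S
          · rw [if_pos h2] at hS; norm_num at hS
          · rw [if_neg h2] at hS; norm_num at hS)
      (by
        intro S hS
        rw [hsum] at hS
        by_cases h2 : w ∈ S
        · by_cases h1 : u ∈ S
          · rw [if_pos h1, if_pos h2] at hS; norm_num at hS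
          · exact lt_of_le_of_ne (hx.1.2 S)
              fun ht => h1 (hsep w u S hw.1 hw.2 hu.1 hu.2 ht h2)
        · rw [if_neg h2] at hS
          by_cases h1 : u ∈ S
          · rw [if_pos h1] at hS; norm_num at hS
          · rw [if_neg h1] at hS; norm_num at hS)
      (by
        intro z hz
        rw [hd] at hz
        by_cases h1 : z = u
        · subst h1
          exact lt_of_le_of_ne (hx.1.1 z) (Ne.symm (hUsupp z (hT'U hu.1)))
        · by_cases h2 : z = w
          · subst h2
            exact lt_of_le_of_ne (hx.1.1 z) (Ne.symm (hUsupp z (hT'U hw.1)))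
          · simp [h1, h2] at hz)
    exact absurd (extreme_no_dir hx d (by
      intro h
      have := congrFun h u
      simp [hd, huw] at this) hε hmem1 hmem2) not_false


/-- The greedy score vector associated to an ordered list of vertices. -/
noncomputable def listScore {V E : Type*} [Fintype E] [DecidableEq V]
    (ends : E → Sym2 V) (l : List V) : V → ℝ := fun v =>
  if v ∈ l then
    (multigraphKappa ends (l.take (l.idxOf v + 1)).toFinset : ℝ)
      - (multigraphKappa ends (l.take (l.idxOf v)).toFinset : ℝ)
  else 0

lemma build_list (hx : x ∈ Set.extremePoints ℝ (scorePolytope ends)) :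
    ∀ (k : ℕ) (T : Finset V), Tight ends x T →
      T ⊆ (Finset.univ.filter fun v => x v ≠ 0) →
      ((Finset.univ.filter fun v => x v ≠ 0) \ T).card = k →
      ∃ l : List V, l.Nodup ∧ (∀ v ∈ l, v ∉ T) ∧
        T ∪ l.toFinset = (Finset.univ.filter fun v => x v ≠ 0) ∧
        ∀ i ≤ l.length, Tight ends x (T ∪ (l.take i).toFinset) := by
  classical
  set X := Finset.univ.filter fun v => x v ≠ 0 with hX
  intro k
  induction k with
  | zero =>
    intro T hT hsub hcard
    have hTX : T = X := by
      apply Finset.Subset.antisymm hsub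
      intro v hv
      by_contra hvT
      have : v ∈ X \ T := mem_sdiff.mpr ⟨hv, hvT⟩
      rw [Finset.card_eq_zero.mp hcard] at this
      exact absurd this (notMem_empty v)
    exact ⟨[], List.nodup_nil, by simp, by simp [hTX], by
      intro i hi
      simp only [List.take_nil, List.toFinset_nil, Finset.union_empty]
      exact hT⟩
  | succ k ih =>
    intro T hT hsub hcard
    have hTX : T ⊂ X := by
      rw [Finset.ssubset_iff_of_subset hsub]
      have : (X \ T).Nonempty := Finset.card_pos.mp (by rw [hcard]; exact Nat.succ_pos k)
      obtain ⟨v, hv⟩ := this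
      rw [mem_sdiff] at hv
      exact ⟨v, hv.1, hv.2⟩
    obtain ⟨u, huX, hunT, htight⟩ := step_lemma hx hT (supp_tight hx) hTX
      (fun v hv => by
        simp only [mem_filter] at hv
        exact hv.2)
    have hsub' : insert u T ⊆ X := Finset.insert_subset huX hsub
    have hcard' : (X \ insert u T).card = k := by
      have h1 : X \ insert u T = (X \ T).erase u := by
        ext w
        simp only [mem_sdiff, mem_insert, mem_erase, not_or]
        tauto
      rw [h1, Finset.card_erase_of_mem (mem_sdiff.mpr ⟨huX, hunT⟩), hcard]
      rfl
    obtain ⟨l', hnodup, hnotmem, hunion, hpre⟩ := ih (insert u T) htight hsub' hcard'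
    refine ⟨u :: l', ?_, ?_, ?_, ?_⟩
    · exact List.nodup_cons.mpr ⟨fun h => hnotmem u h (mem_insert_self u T), hnodup⟩
    · intro v hv
      rcases List.mem_cons.mp hv with rfl | hv
      · exact hunT
      · exact fun hvT => hnotmem v hv (mem_insert_of_mem hvT)
    · rw [List.toFinset_cons, ← hunion]
      ext w
      simp only [mem_union, mem_insert]
      tauto
    · intro i hi
      match i with
      | 0 => simpa using hT
      | j + 1 =>
        have hj : j ≤ l'.length := by
          simpa [List.length_cons, Nat.succ_le_succ_iff] using hi
        have hset : T ∪ insert u ((l'.take j).toFinset)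
            = insert u T ∪ (l'.take j).toFinset := by
          ext w
          simp only [mem_union, mem_insert]
          tauto
        rw [List.take_cons (Nat.succ_pos j), List.toFinset_cons,
          (by omega : j.succ - 1 = j), hset]
        exact hpre j hj

lemma get_not_mem_take {l : List V} (hl : l.Nodup) {i : ℕ} (hi : i < l.length) :
    l.get ⟨i, hi⟩ ∉ l.take i := by
  intro hmem
  obtain ⟨j, hget⟩ := List.mem_iff_get.mp hmem
  have hji : (j : ℕ) < i :=
    (by simpa [List.length_take, lt_min_iff] using j.isLt : (j : ℕ) < i ∧ (j : ℕ) < l.length).1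
  have hjlen : (j : ℕ) < l.length := hji.trans hi
  have heq : l.get ⟨j, hjlen⟩ = l.get ⟨i, hi⟩ := by
    rw [show l.get ⟨j, hjlen⟩ = (l.take i).get ⟨j, by simp [hji, hjlen]⟩ from by simp]
    convert hget using 2
  have := List.nodup_iff_injective_get.mp hl heq
  simp only [Fin.mk.injEq] at this
  omega

lemma recon (hl : l.Nodup) (hzero : ∀ v, v ∉ l → x v = 0)
    (htight : ∀ i ≤ l.length, Tight ends x ((l.take i).toFinset)) :
    x = listScore ends l := by
  funext v
  by_cases hv : v ∈ l
  · have hi : l.idxOf v < l.length := List.idxOf_lt_length_iff.mpr hv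
    set i := l.idxOf v with hidef
    have hgetv : l.get ⟨i, hi⟩ = v := List.idxOf_get hi
    have h1 := htight i (le_of_lt hi)
    have h2 := htight (i + 1) hi
    have htake : (l.take (i + 1)).toFinset = insert v (l.take i).toFinset := by
      have hv' : l[i]? = some v := by
        rw [List.getElem?_eq_getElem hi]
        exact congrArg some (by simpa using hgetv)
      rw [List.take_succ, hv']
      ext w
      simp [or_comm]
    have hvnot : v ∉ (l.take i).toFinset := by
      rw [List.mem_toFinset]
      rw [← hgetv]
      exact get_not_mem_take hl hi
    rw [htake] at h2
    unfold Tight at h1 h2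
    rw [Finset.sum_insert hvnot] at h2
    have hform : x v = (multigraphKappa ends (l.take (i + 1)).toFinset : ℝ)
        - (multigraphKappa ends (l.take i).toFinset : ℝ) := by
      rw [htake]
      linarith
    rw [listScore, if_pos hv, ← hidef, ← hform]
  · rw [listScore, if_neg hv]
    exact hzero v hv

lemma exists_list (hx : x ∈ Set.extremePoints ℝ (scorePolytope ends)) :
    ∃ l : List V, l.Nodup ∧ x = listScore ends l := by
  classical
  obtain ⟨l, hnodup, hnotmem, hunion, hpre⟩ :=
    build_list hx ((Finset.univ.filter fun v => x v ≠ 0)).card ∅ tight_empty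
      (Finset.empty_subset _) (by rw [Finset.sdiff_empty])
  rw [Finset.empty_union] at hunion
  refine ⟨l, hnodup, recon hnodup ?_ ?_⟩
  · intro v hv
    by_contra h
    have : v ∈ l.toFinset := by
      rw [hunion, mem_filter]
      exact ⟨mem_univ v, h⟩
    exact hv (List.mem_toFinset.mp this)
  · intro i hi
    have := hpre i hi
    rwa [Finset.empty_union] at this


end Aux

end ScorePolytopeAux

open ScorePolytopeAux in
/-- The score vector polytope of a multigraph with `n` vertices has finitely
many extreme points, at most `∑_{i=0}^{n} n!/i! = ⌊e·n!⌋` of them. -/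
theorem card_extremePoints_scorePolytope_le
    {V E : Type*} [Fintype V] [Fintype E] [DecidableEq V]
    (ends : E → Sym2 V) :
    (Set.extremePoints ℝ (scorePolytope ends)).Finite ∧
      (Set.extremePoints ℝ (scorePolytope ends)).ncard ≤
        ∑ i ∈ Finset.range (Fintype.card V + 1),
          (Fintype.card V).factorial / i.factorial := by
  classical
  set n := Fintype.card V with hn
  set s := Set.extremePoints ℝ (scorePolytope ends) with hs
  set dec : (Σ k : Fin (n + 1), (Fin (k : ℕ) ↪ V)) → (V → ℝ) :=
    fun t => listScore ends (List.ofFn t.2) with hdec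
  have hsub : s ⊆ Set.range dec := by
    intro x hx
    obtain ⟨l, hnodup, hx_eq⟩ := exists_list hx
    refine ⟨⟨⟨l.length, Nat.lt_succ_of_le hnodup.length_le_card⟩,
      ⟨l.get, List.nodup_iff_injective_get.mp hnodup⟩⟩, ?_⟩
    show listScore ends (List.ofFn l.get) = x
    rw [List.ofFn_get]
    exact hx_eq.symm
  refine ⟨(Set.finite_range dec).subset hsub, ?_⟩
  calc s.ncard ≤ (Set.range dec).ncard :=
        Set.ncard_le_ncard hsub (Set.finite_range dec)
    _ ≤ Fintype.card (Σ k : Fin (n + 1), (Fin (k : ℕ) ↪ V)) := by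
        rw [← Set.image_univ]
        exact (Set.ncard_image_le Set.finite_univ).trans_eq
          (by rw [Set.ncard_univ, Nat.card_eq_fintype_card])
    _ = ∑ k ∈ Finset.range (n + 1), n.descFactorial k := by
        rw [Fintype.card_sigma, ← Fin.sum_univ_eq_sum_range]
        exact Finset.sum_congr rfl fun k _ => by
          rw [Fintype.card_embedding_eq, Fintype.card_fin]
    _ = ∑ i ∈ Finset.range (n + 1), n.factorial / i.factorial := by
        rw [← Finset.sum_range_reflect (fun k => n.descFactorial k) (n + 1)]
        refine Finset.sum_congr rfl fun i hi => ?_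
        rw [Finset.mem_range] at hi
        have hin : i ≤ n := Nat.lt_succ_iff.mp hi
        rw [(by omega : n + 1 - 1 - i = n - i),
          Nat.descFactorial_eq_div (Nat.sub_le n i), Nat.sub_sub_self hin]
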